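/- Let A be a nonnegative regular summability matrix and (X,d) a metric space. A sequence x = (x_k) in X is A-statistically convergent to L ∈ X if and only if there exists a set G = {q₁ < q₂ < q₃ < ...} ⊆ ℕ with δ_A(G) = 1 such that the subsequence (x_{q_n}) converges to L in the usual sense. -/

import Mathlib

open Filter Topology

/-- `a` is a nonnegative regular summability matrix. -/
def IsRegularMatrix (a : ℕ → ℕ → ℝ) : Prop :=
  (∀ n k, 0 ≤ a n k) ∧
  (∀ n, Summable (a n)) ∧
  (∃ C : ℝ, ∀ n, ∑' k, a n k ≤ C) ∧
  (∀ k, Tendsto (fun n => a n k) atTop (𝓝 0)) ∧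
  Tendsto (fun n => ∑' k, a n k) atTop (𝓝 1)

/-- The set `B ⊆ ℕ` has `A`-density `d`: `lim_n Σ_{k ∈ B} a n k = d`. -/
def HasADensity (a : ℕ → ℕ → ℝ) (B : Set ℕ) (d : ℝ) : Prop :=
  Tendsto (fun n => ∑' k, Set.indicator B (a n) k) atTop (𝓝 d)

/-- `x` is `A`-statistically convergent to `L`. -/
def AStatTendsto {X : Type*} [MetricSpace X] (a : ℕ → ℕ → ℝ) (x : ℕ → X) (L : X) : Prop :=
  ∀ ε > 0, HasADensity a {k | ε ≤ dist (x k) L} 0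

/-- `x` is `A`-statistically Cauchy. -/
def AStatCauchy {X : Type*} [MetricSpace X] (a : ℕ → ℕ → ℝ) (x : ℕ → X) : Prop :=
  ∀ ε > 0, ∃ k₀ : ℕ, HasADensity a {k | ε ≤ dist (x k) (x k₀)} 0

/-- `p` is an `A`-statistical limit point of `x`: some subsequence of `x` indexed by an
(infinite) index set not having `A`-density zero converges to `p`. -/
def AStatLimitPt {X : Type*} [MetricSpace X] (a : ℕ → ℕ → ℝ) (x : ℕ → X) (p : X) : Prop :=
  ∃ q : ℕ → ℕ, StrictMono q ∧ ¬ HasADensity a (Set.range q) 0 ∧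
    Tendsto (fun n => x (q n)) atTop (𝓝 p)

/-- `p` is an `A`-statistical cluster point of `x`. -/
def AStatClusterPt {X : Type*} [MetricSpace X] (a : ℕ → ℕ → ℝ) (x : ℕ → X) (p : X) : Prop :=
  ∀ ε > 0, ¬ HasADensity a {k | dist (x k) p < ε} 0

/-- `p` is an ordinary limit point of the sequence `x`: some subsequence converges to `p`. -/
def OrdLimitPt {X : Type*} [MetricSpace X] (x : ℕ → X) (p : X) : Prop :=
  ∃ q : ℕ → ℕ, StrictMono q ∧ Tendsto (fun n => x (q n)) atTop (𝓝 p)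

/-- `x` is strongly `A`-summable to `L`: `lim_j Σ_k a j k * d(x k, L) = 0`. -/
def StrongASummable {X : Type*} [MetricSpace X] (a : ℕ → ℕ → ℝ) (x : ℕ → X) (L : X) : Prop :=
  Tendsto (fun j => ∑' k, a j k * dist (x k) L) atTop (𝓝 0)


section Aux
variable {a : ℕ → ℕ → ℝ}

lemma summable_ind (hsum : ∀ n, Summable (a n)) (B : Set ℕ) (n : ℕ) :
    Summable (B.indicator (a n)) := (hsum n).indicator B

lemma S_nonneg (h0 : ∀ n k, 0 ≤ a n k) (B : Set ℕ) (n : ℕ) :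
    0 ≤ ∑' k, B.indicator (a n) k :=
  tsum_nonneg fun k => Set.indicator_nonneg (fun i _ => h0 n i) k

lemma S_mono (h0 : ∀ n k, 0 ≤ a n k) (hsum : ∀ n, Summable (a n)) {B C : Set ℕ}
    (hBC : B ⊆ C) (n : ℕ) :
    ∑' k, B.indicator (a n) k ≤ ∑' k, C.indicator (a n) k :=
  Summable.tsum_le_tsum (fun k => Set.indicator_le_indicator_of_subset hBC (fun i => h0 n i) k)
    (summable_ind hsum B n) (summable_ind hsum C n)

lemma density_zero_of_subset (h0 : ∀ n k, 0 ≤ a n k) (hsum : ∀ n, Summable (a n))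
    {B C : Set ℕ} (hBC : B ⊆ C) (hC : HasADensity a C 0) : HasADensity a B 0 :=
  squeeze_zero (fun n => S_nonneg h0 B n) (fun n => S_mono h0 hsum hBC n) hC

lemma S_add_compl (hsum : ∀ n, Summable (a n)) (B : Set ℕ) (n : ℕ) :
    (∑' k, B.indicator (a n) k) + (∑' k, Bᶜ.indicator (a n) k) = ∑' k, a n k := by
  rw [← Summable.tsum_add (summable_ind hsum B n) (summable_ind hsum Bᶜ n)]
  exact tsum_congr fun k => by
    simpa using congrFun (Set.indicator_self_add_compl B (a n)) k

lemma density_compl_zero (hA : IsRegularMatrix a) {B : Set ℕ}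
    (hB : HasADensity a B 1) : HasADensity a Bᶜ 0 := by
  obtain ⟨h0, hsum, -, -, htot⟩ := hA
  have : (fun n => ∑' k, Bᶜ.indicator (a n) k)
      = fun n => (∑' k, a n k) - ∑' k, B.indicator (a n) k := by
    funext n; rw [← S_add_compl hsum B n]; ring
  rw [HasADensity, this]
  simpa using htot.sub hB

lemma density_one_of_compl (hA : IsRegularMatrix a) {B : Set ℕ}
    (hB : HasADensity a Bᶜ 0) : HasADensity a B 1 := by
  obtain ⟨h0, hsum, -, -, htot⟩ := hA
  have : (fun n => ∑' k, B.indicator (a n) k)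
      = fun n => (∑' k, a n k) - ∑' k, Bᶜ.indicator (a n) k := by
    funext n; rw [← S_add_compl hsum B n]; ring
  rw [HasADensity, this]
  simpa using htot.sub hB

lemma density_zero_finite (hA : IsRegularMatrix a) {B : Set ℕ} (hB : B.Finite) :
    HasADensity a B 0 := by
  obtain ⟨h0, hsum, -, hcol, -⟩ := hA
  have key : ∀ n, ∑' k, B.indicator (a n) k = ∑ k ∈ hB.toFinset, a n k := by
    intro n
    rw [tsum_eq_sum (s := hB.toFinset) (fun k hk =>
      Set.indicator_of_notMem (by simpa using hk) _)]
    exact Finset.sum_congr rfl fun k hk =>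
      Set.indicator_of_mem (by simpa using hk) _
  simp only [HasADensity, key]
  have := tendsto_finset_sum hB.toFinset (fun k _ => hcol k)
  simpa using this

lemma density_zero_union (h0 : ∀ n k, 0 ≤ a n k) (hsum : ∀ n, Summable (a n))
    {B C : Set ℕ} (hB : HasADensity a B 0) (hC : HasADensity a C 0) :
    HasADensity a (B ∪ C) 0 := by
  apply squeeze_zero (fun n => S_nonneg h0 _ n)
    (g := fun n => (∑' k, B.indicator (a n) k) + ∑' k, C.indicator (a n) k)
  · intro n
    rw [← Summable.tsum_add (summable_ind hsum B n) (summable_ind hsum C n)]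
    refine Summable.tsum_le_tsum (fun k => ?_) (summable_ind hsum _ n)
      ((summable_ind hsum B n).add (summable_ind hsum C n))
    by_cases hb : k ∈ B
    · rw [Set.indicator_of_mem (Set.mem_union_left _ hb), Set.indicator_of_mem hb]
      simpa using Set.indicator_nonneg (fun i _ => h0 n i) k
    · by_cases hc : k ∈ C
      · rw [Set.indicator_of_mem (Set.mem_union_right _ hc), Set.indicator_of_mem hc,
          Set.indicator_of_notMem hb]
        simp
      · rw [Set.indicator_of_notMem (by simp [hb, hc]), Set.indicator_of_notMem hb,
          Set.indicator_of_notMem hc]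
        simp
  · simpa using hB.add hC

lemma exists_strictMono_thresh (P : ℕ → ℕ → Prop) (h : ∀ j, ∃ m, ∀ n ≥ m, P j n) :
    ∃ f : ℕ → ℕ, StrictMono f ∧ ∀ j, ∀ n ≥ f j, P j n := by
  choose m hm using h
  refine ⟨fun j => (Finset.range (j + 1)).sup m + j, fun i j hij => ?_, fun j n hn => ?_⟩
  · have h : (Finset.range (i + 1)).sup m ≤ (Finset.range (j + 1)).sup m :=
      Finset.sup_mono (by simpa using hij.le)
    dsimp only
    omega
  · exact hm j n (le_trans (le_add_of_le_left
      (Finset.le_sup (by simp : j ∈ Finset.range (j + 1)))) hn)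

lemma tail_eq (hsum : ∀ n, Summable (a n)) (n N : ℕ) :
    ∑' k, Set.indicator {k | N < k} (a n) k
      = (∑' k, a n k) - ∑ i ∈ Finset.range (N + 1), a n i := by
  have hset : {k : ℕ | N < k} = (↑(Finset.range (N + 1)) : Set ℕ)ᶜ := by
    ext k; simp [Nat.lt_succ_iff, Nat.succ_le_iff]
  have hfin : ∑' k, Set.indicator (↑(Finset.range (N + 1)) : Set ℕ) (a n) k
      = ∑ i ∈ Finset.range (N + 1), a n i := by
    rw [tsum_eq_sum (s := Finset.range (N + 1)) (fun k hk =>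
      Set.indicator_of_notMem (by simpa using hk) _)]
    exact Finset.sum_congr rfl fun k hk => Set.indicator_of_mem (by simpa using hk) _
  have := S_add_compl hsum (↑(Finset.range (N + 1)) : Set ℕ) n
  rw [hset, ← hfin]
  linarith

lemma tendsto_tail (hsum : ∀ n, Summable (a n)) (n : ℕ) :
    Tendsto (fun N => ∑' k, Set.indicator {k | N < k} (a n) k) atTop (𝓝 0) := by
  simp only [tail_eq hsum n]
  have h1 : Tendsto (fun N : ℕ => ∑ i ∈ Finset.range (N + 1), a n i) atTop
      (𝓝 (∑' k, a n k)) :=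
    (hsum n).hasSum.tendsto_sum_nat.comp (tendsto_add_atTop_nat 1)
  simpa using (tendsto_const_nhds (x := ∑' k, a n k)).sub h1


lemma S_union_le (h0 : ∀ n k, 0 ≤ a n k) (hsum : ∀ n, Summable (a n)) (B C : Set ℕ) (n : ℕ) :
    ∑' k, (B ∪ C).indicator (a n) k
      ≤ (∑' k, B.indicator (a n) k) + ∑' k, C.indicator (a n) k := by
  rw [← Summable.tsum_add (summable_ind hsum B n) (summable_ind hsum C n)]
  refine Summable.tsum_le_tsum (fun k => ?_) (summable_ind hsum _ n)
    ((summable_ind hsum B n).add (summable_ind hsum C n))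
  by_cases hb : k ∈ B
  · rw [Set.indicator_of_mem (Set.mem_union_left _ hb), Set.indicator_of_mem hb]
    simpa using Set.indicator_nonneg (fun i _ => h0 n i) k
  · by_cases hc : k ∈ C
    · rw [Set.indicator_of_mem (Set.mem_union_right _ hc), Set.indicator_of_mem hc,
        Set.indicator_of_notMem hb]
      simp
    · rw [Set.indicator_of_notMem (by simp [hb, hc]), Set.indicator_of_notMem hb,
        Set.indicator_of_notMem hc]
      simp

end Aux

theorem stmt3 {X : Type*} [MetricSpace X] {a : ℕ → ℕ → ℝ} (hA : IsRegularMatrix a)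
    {x : ℕ → X} {L : X} :
    AStatTendsto a x L ↔
      ∃ q : ℕ → ℕ, StrictMono q ∧ HasADensity a (Set.range q) 1 ∧
        Filter.Tendsto (fun n => x (q n)) Filter.atTop (𝓝 L) := by
  obtain ⟨h0, hsum, hC, hcol, htot⟩ := id hA
  constructor
  · intro hx
    set T : ℕ → Set ℕ := fun j => {k | 1 / ((j : ℝ) + 1) ≤ dist (x k) L} with hTdef
    have hTd : ∀ j, HasADensity a (T j) 0 := fun j => hx (1 / ((j : ℝ) + 1)) (by positivity)
    have hTm : ∀ {i j : ℕ}, i ≤ j → T i ⊆ T j := by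
      intro i j hij k hk
      simp only [hTdef, Set.mem_setOf_eq] at hk ⊢
      refine le_trans ?_ hk
      apply one_div_le_one_div_of_le (by positivity)
      have : (i : ℝ) ≤ j := by exact_mod_cast hij
      linarith
    obtain ⟨r, hrmono, hr⟩ := exists_strictMono_thresh
      (fun j n => ∑' k, (T j).indicator (a n) k < 1 / (2 * ((j : ℝ) + 1)))
      (fun j => eventually_atTop.mp
        (Filter.Tendsto.eventually_lt_const
          (show (0:ℝ) < 1 / (2 * ((j : ℝ) + 1)) by positivity) (hTd j)))
    obtain ⟨N, hNmono, hN⟩ := exists_strictMono_thresh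
      (fun j M => ∀ n ≤ r (j + 1),
        ∑' k, Set.indicator {k | M < k} (a n) k < 1 / (2 * ((j : ℝ) + 1)))
      (fun j => by
        choose m hm using fun n => eventually_atTop.mp
          (Filter.Tendsto.eventually_lt_const
            (show (0:ℝ) < 1 / (2 * ((j : ℝ) + 1)) by positivity) (tendsto_tail hsum n))
        exact ⟨(Finset.range (r (j + 1) + 1)).sup m, fun M hM n hn =>
          hm n M (le_trans (Finset.le_sup (by simp [Nat.lt_succ_iff, hn])) hM)⟩)
    set bad : Set ℕ := ⋃ i, T i ∩ Set.Ioc (N i) (N (i + 1)) with hbaddef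
    have hbad : ∀ j n, r j ≤ n → ∑' k, bad.indicator (a n) k < 1 / ((j : ℝ) + 1) := by
      intro j n hn
      set j' := Nat.findGreatest (fun i => r i ≤ n) n with hj'def
      have hjn : j ≤ n := le_trans hrmono.le_apply hn
      have hjj' : j ≤ j' := Nat.le_findGreatest (P := fun i => r i ≤ n) hjn hn
      have hj'1 : r j' ≤ n := Nat.findGreatest_spec (P := fun i => r i ≤ n) hjn hn
      have hj'2 : n < r (j' + 1) := by
        by_cases hc : j' + 1 ≤ n
        · by_contra hcon
          exact Nat.findGreatest_is_greatest (P := fun i => r i ≤ n) (Nat.lt_succ_self j') hc (not_lt.mp hcon)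
        · exact lt_of_lt_of_le (by omega) hrmono.le_apply
      have hsub : bad ⊆ T j' ∪ {k | N j' < k} := by
        intro k hk
        simp only [hbaddef, Set.mem_iUnion, Set.mem_inter_iff, Set.mem_Ioc] at hk
        obtain ⟨i, hki, hk1, hk2⟩ := hk
        by_cases hij : i ≤ j'
        · exact Or.inl (hTm hij hki)
        · exact Or.inr (lt_of_le_of_lt (hNmono.monotone (by omega)) hk1)
      have h1 : ∑' k, (T j').indicator (a n) k < 1 / (2 * ((j' : ℝ) + 1)) := hr j' n hj'1
      have h2 : ∑' k, Set.indicator {k | N j' < k} (a n) k < 1 / (2 * ((j' : ℝ) + 1)) :=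
        hN j' (N j') le_rfl n hj'2.le
      have hle : ∑' k, bad.indicator (a n) k
          ≤ (∑' k, (T j').indicator (a n) k)
            + ∑' k, Set.indicator {k | N j' < k} (a n) k :=
        le_trans (S_mono h0 hsum hsub n) (S_union_le h0 hsum _ _ n)
      have hhalf : 1 / (2 * ((j' : ℝ) + 1)) + 1 / (2 * ((j' : ℝ) + 1))
          = 1 / ((j' : ℝ) + 1) := by
        have h2 : ((j' : ℝ) + 1) ≠ 0 := by positivity
        rw [← add_div, eq_div_iff h2]
        field_simp
        norm_num
      have hmono : 1 / ((j' : ℝ) + 1) ≤ 1 / ((j : ℝ) + 1) := by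
        apply one_div_le_one_div_of_le (by positivity)
        have : (j : ℝ) ≤ j' := by exact_mod_cast hjj'
        linarith
      linarith
    have hbadd : HasADensity a bad 0 := by
      rw [HasADensity, Metric.tendsto_atTop]
      intro ε hε
      obtain ⟨j, hj⟩ := exists_nat_one_div_lt hε
      exact ⟨r j, fun n hn => by
        rw [Real.dist_eq, sub_zero, abs_of_nonneg (S_nonneg h0 _ n)]
        exact lt_trans (hbad j n hn) hj⟩
    have hGd : HasADensity a badᶜ 1 :=
      density_one_of_compl hA (by rw [compl_compl]; exact hbadd)
    have hGinf : {k | k ∈ badᶜ}.Infinite := by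
      rw [Set.setOf_mem_eq]
      intro hfin
      exact one_ne_zero (tendsto_nhds_unique hGd (density_zero_finite hA hfin))
    refine ⟨Nat.nth (· ∈ badᶜ), Nat.nth_strictMono hGinf, ?_, ?_⟩
    · rw [show Set.range (Nat.nth (· ∈ badᶜ)) = badᶜ from
        (Nat.range_nth_of_infinite hGinf).trans Set.setOf_mem_eq]
      exact hGd
    · rw [Metric.tendsto_atTop]
      intro ε hε
      obtain ⟨i, hi⟩ := exists_nat_one_div_lt hε
      refine ⟨N i + 1, fun n hn => ?_⟩
      set k := Nat.nth (· ∈ badᶜ) n with hkdef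
      have hkG : k ∈ badᶜ := Nat.nth_mem_of_infinite hGinf n
      have hik : N i < k :=
        lt_of_lt_of_le (Nat.lt_succ_self _)
          (le_trans hn (Nat.nth_strictMono hGinf).le_apply)
      have hex : ∃ m, k ≤ N m := ⟨k, hNmono.le_apply⟩
      set m := Nat.find hex with hmdef
      have hm : k ≤ N m := Nat.find_spec hex
      have him : i < m := by
        by_contra hc
        exact absurd (le_trans hm (hNmono.monotone (not_lt.mp hc))) (not_le.mpr hik)
      have hm1 : 1 ≤ m := by omega
      have hm' : N (m - 1) < k := not_le.mp (Nat.find_min hex (by omega))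
      have hmeq : m - 1 + 1 = m := by omega
      have hkT : k ∉ T (m - 1) := by
        intro hkt
        exact hkG (Set.mem_iUnion.mpr ⟨m - 1, ⟨hkt, hm', by rwa [hmeq]⟩⟩)
      have hdist : dist (x k) L < 1 / (((m - 1 : ℕ) : ℝ) + 1) := by
        simp only [hTdef, Set.mem_setOf_eq, not_le] at hkT
        exact hkT
      have hle : (1 : ℝ) / (((m - 1 : ℕ) : ℝ) + 1) ≤ 1 / ((i : ℝ) + 1) := by
        apply one_div_le_one_div_of_le (by positivity)
        have : (i : ℝ) ≤ ((m - 1 : ℕ) : ℝ) := by exact_mod_cast (by omega : i ≤ m - 1)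
        linarith
      calc dist (x k) L < 1 / (((m - 1 : ℕ) : ℝ) + 1) := hdist
        _ ≤ 1 / ((i : ℝ) + 1) := hle
        _ < ε := hi
  · rintro ⟨q, hq, hd, hconv⟩
    intro ε hε
    obtain ⟨M, hM⟩ := Metric.tendsto_atTop.mp hconv ε hε
    have hsubset : {k | ε ≤ dist (x k) L} ⊆ (Set.range q)ᶜ ∪ q '' Set.Iio M := by
      intro k hk
      by_cases hr : k ∈ Set.range q
      · obtain ⟨n, rfl⟩ := hr
        refine Or.inr ⟨n, ?_, rfl⟩
        by_contra hnM
        exact absurd hk (not_le.mpr (hM n (not_lt.mp hnM)))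
      · exact Or.inl hr
    exact density_zero_of_subset h0 hsum hsubset
      (density_zero_union h0 hsum (density_compl_zero hA hd)
        (density_zero_finite hA ((Set.finite_Iio M).image q)))
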